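/- arXiv:1509.00320 — 5 statements merged into one kernel-verified Lean document; each statement's English description precedes it below -/
import Mathlib

section
/- B is flat as an A-module; that is, the natural map A → B makes B a flat A-algebra. -/
open MvPowerSeries

/-- The ideal `(xy - c)` in the formal power series ring `A⟦x,y⟧`, where `x = X 0`,
`y = X 1`. -/
noncomputable def hyperIdeal (A : Type) [CommRing A] (c : A) :
    Ideal (MvPowerSeries (Fin 2) A) :=
  Ideal.span {X 0 * X 1 - (C c : MvPowerSeries (Fin 2) A)}

/-- The ring `B = A⟦x,y⟧/(xy - c)`. -/
abbrev Bring (A : Type) [CommRing A] (c : A) : Type :=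
  MvPowerSeries (Fin 2) A ⧸ hyperIdeal A c

theorem flat_iff_isTrivialRelation_aux {R : Type} [CommRing R] {M : Type} [AddCommGroup M]
    [Module R M] : Module.Flat R M ↔ ∀ {ι : Type} [Fintype ι] {f : ι → R} {x : ι → M},
      ∑ i, f i • x i = 0 → Module.IsTrivialRelation f x := by
  constructor
  · intro h ι _ f x hx
    let e := Fintype.equivFin ι
    rw [← e.symm.isTrivialRelation_comp]
    refine Module.Flat.iff_forall_isTrivialRelation.mp h ?_
    rw [← hx]
    exact e.symm.sum_comp (fun i => f i • x i)
  · intro h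
    rw [Module.Flat.iff_forall_isTrivialRelation]
    intro l f x hx
    exact h hx

theorem isTrivialRelation_of_fintype_aux {R : Type} [CommRing R] {M : Type} [AddCommGroup M]
    [Module R M] {ι : Type} [Fintype ι] {f : ι → R} {x : ι → M} (κ : Type) [Fintype κ]
    (a : ι → κ → R) (y : κ → M) (h1 : ∀ i, x i = ∑ j, a i j • y j)
    (h2 : ∀ j, ∑ i, f i * a i j = 0) : Module.IsTrivialRelation f x := by
  let e := Fintype.equivFin κ
  refine ⟨Fintype.card κ, fun i j => a i (e.symm j), fun j => y (e.symm j), fun i => ?_,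
    fun j => h2 _⟩
  rw [h1 i]
  exact (e.symm.sum_comp (fun j => a i j • y j)).symm

/-- A product of copies of a Noetherian ring is flat, via the equational criterion. -/
theorem flat_pi_aux (R : Type) [CommRing R] [IsNoetherianRing R] (σ : Type) :
    Module.Flat R (σ → R) := by
  rw [flat_iff_isTrivialRelation_aux]
  intro ι _ f x hx
  let φ : (ι → R) →ₗ[R] R :=
    { toFun := fun v => ∑ i, f i * v i
      map_add' := by intro a b; simp [mul_add, Finset.sum_add_distrib]
      map_smul' := by intro r v; simp [Finset.mul_sum, mul_left_comm] }
  obtain ⟨s, hs⟩ : (LinearMap.ker φ).FG := IsNoetherian.noetherian _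
  have hvK : ∀ m : σ, (fun i => x i m) ∈ LinearMap.ker φ := by
    intro m
    have := congrFun hx m
    simpa [φ, Finset.sum_apply] using this
  have hspan : ∀ m : σ, (fun i => x i m) ∈
      Submodule.span R (Set.range (Subtype.val : s → (ι → R))) := by
    intro m
    have hr : Set.range (Subtype.val : s → (ι → R)) = (s : Set (ι → R)) :=
      Subtype.range_val
    rw [hr, hs]
    exact hvK m
  choose u hu using fun m => (Submodule.mem_span_range_iff_exists_fun R).mp (hspan m)
  refine isTrivialRelation_of_fintype_aux s (fun i j => (j : ι → R) i) (fun j m => u m j) ?_ ?_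
  · intro i
    funext m
    have := congrFun (hu m) i
    simpa [Finset.sum_apply, mul_comm] using this.symm
  · intro j
    have : (j : ι → R) ∈ LinearMap.ker φ := by rw [← hs]; exact Submodule.subset_span j.2
    simpa [φ] using this

/-- Criterion for flatness of a quotient of a flat module. -/
theorem flat_quotient_aux {R : Type} [CommRing R] {M : Type} [AddCommGroup M] [Module R M]
    [Module.Flat R M] (K : Submodule R M)
    (hK : ∀ (ι : Type) [Fintype ι] (f : ι → R) (v : ι → M), (∑ i, f i • v i) ∈ K →
      ∃ w : ι → M, (∀ i, w i ∈ K) ∧ ∑ i, f i • v i = ∑ i, f i • w i) :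
    Module.Flat R (M ⧸ K) := by
  rw [flat_iff_isTrivialRelation_aux]
  intro ι _ f x hx
  choose m hm using fun i => Submodule.Quotient.mk_surjective K (x i)
  have hmem : (∑ i, f i • m i) ∈ K := by
    rw [← Submodule.Quotient.mk_eq_zero]
    have : Submodule.Quotient.mk (p := K) (∑ i, f i • m i) = ∑ i, f i • x i := by
      rw [show (Submodule.Quotient.mk : M → M ⧸ K) = K.mkQ from rfl, map_sum]
      simp [hm]
    rw [this, hx]
  obtain ⟨w, hwK, hw⟩ := hK ι f m hmem
  have hz : ∑ i, f i • (m i - w i) = 0 := by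
    simp only [smul_sub, Finset.sum_sub_distrib, hw, sub_self]
  obtain ⟨κ, a, y, h1, h2⟩ := flat_iff_isTrivialRelation_aux.mp ‹_› hz
  refine ⟨κ, a, fun j => Submodule.Quotient.mk (y j), ?_, h2⟩
  intro i
  have : x i = Submodule.Quotient.mk (p := K) (m i - w i) := by
    rw [Submodule.Quotient.mk_sub, ← hm i, (Submodule.Quotient.mk_eq_zero K).mpr (hwK i), sub_zero]
  rw [this, show m i - w i = ∑ j, a i j • y j from h1 i,
    show (Submodule.Quotient.mk : M → M ⧸ K) = K.mkQ from rfl, map_sum]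
  simp

/-- Krull intersection: if `a` is congruent mod `I` to a multiple of `c ^ n` for every `n`,
then `a ∈ I`. -/
lemma krull_aux {A : Type} [CommRing A] [IsNoetherianRing A] [IsLocalRing A]
    {c : A} (hc : c ∈ IsLocalRing.maximalIdeal A) (I : Ideal A) (a : A)
    (h : ∀ n : ℕ, ∃ b, a - c ^ n * b ∈ I) : a ∈ I := by
  by_cases hI : I = ⊤
  · simp [hI]
  haveI : Nontrivial (A ⧸ I) := Ideal.Quotient.nontrivial_iff.mpr hI
  haveI : IsLocalRing (A ⧸ I) := IsLocalRing.of_surjective' _ Ideal.Quotient.mk_surjective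
  set cb : A ⧸ I := Ideal.Quotient.mk I c with hcb
  have hne : Ideal.span {cb} ≠ ⊤ := by
    rw [Ne, Ideal.span_singleton_eq_top]
    intro hu
    obtain ⟨b, hb⟩ : ∃ b : A, cb * Ideal.Quotient.mk I b = 1 := by
      obtain ⟨u, hu'⟩ := hu
      obtain ⟨b, hb⟩ := Ideal.Quotient.mk_surjective (I := I) ↑u⁻¹
      exact ⟨b, by rw [hb, ← hu', Units.mul_inv]⟩
    have h1 : c * b - 1 ∈ I := by
      rw [← Ideal.Quotient.eq_zero_iff_mem, map_sub, map_mul, map_one, ← hcb, hb, sub_eq_zero]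
    have h2 : c * b - 1 ∈ IsLocalRing.maximalIdeal A :=
      IsLocalRing.le_maximalIdeal hI h1
    have h3 : (1 : A) ∈ IsLocalRing.maximalIdeal A := by
      have := Submodule.sub_mem _ (Ideal.mul_mem_right b _ hc) h2
      simpa using this
    exact (Ideal.ne_top_iff_one _).mp (IsLocalRing.maximalIdeal.isMaximal A).ne_top h3
  have hmem : Ideal.Quotient.mk I a ∈ ⨅ n : ℕ, Ideal.span {cb} ^ n := by
    rw [Submodule.mem_iInf]
    intro n
    obtain ⟨b, hb⟩ := h n
    have : Ideal.Quotient.mk I a = cb ^ n * Ideal.Quotient.mk I b := by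
      rw [← map_pow, ← map_mul, ← sub_eq_zero, ← map_sub, Ideal.Quotient.eq_zero_iff_mem]
      exact hb
    rw [this, Ideal.span_singleton_pow]
    exact Ideal.mul_mem_right _ _ (Ideal.subset_span rfl)
  rw [Ideal.iInf_pow_eq_bot_of_isLocalRing _ hne] at hmem
  rwa [Submodule.mem_bot, Ideal.Quotient.eq_zero_iff_mem] at hmem

/-- The monomial `x * y`. -/
noncomputable def eMon : Fin 2 →₀ ℕ := Finsupp.single 0 1 + Finsupp.single 1 1

lemma coeff_key {A : Type} [CommRing A] (c : A) (h : MvPowerSeries (Fin 2) A)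
    (m : Fin 2 →₀ ℕ) :
    coeff (m + eMon) ((X 0 * X 1 - (C c : MvPowerSeries (Fin 2) A)) * h) =
      coeff m h - c * coeff (m + eMon) h := by
  have hX : (X 0 * X 1 : MvPowerSeries (Fin 2) A) = monomial eMon 1 := by
    rw [X_def, X_def, monomial_mul_monomial, one_mul, eMon]
  rw [sub_mul, map_sub, hX, coeff_monomial_mul, if_pos le_add_self, add_tsub_cancel_right,
    one_mul]
  congr 1
  rw [coeff_C_mul]

/-- `x * y - c` is "injective mod `I`" for every ideal `I` of `A`. -/
lemma nzd_mod {A : Type} [CommRing A] [IsNoetherianRing A] [IsLocalRing A]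
    {c : A} (hc : c ∈ IsLocalRing.maximalIdeal A) (I : Ideal A)
    (h : MvPowerSeries (Fin 2) A)
    (hrel : ∀ m, coeff m ((X 0 * X 1 - (C c : MvPowerSeries (Fin 2) A)) * h) ∈ I) :
    ∀ m, coeff m h ∈ I := by
  have step : ∀ m, coeff m h - c * coeff (m + eMon) h ∈ I := by
    intro m
    have := hrel (m + eMon)
    rwa [coeff_key] at this
  have iter : ∀ (n : ℕ) (m), coeff m h - c ^ n * coeff (m + n • eMon) h ∈ I := by
    intro n
    induction n with
    | zero => intro m; simp
    | succ n ih =>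
      intro m
      have A1 := ih m
      have A2 := step (m + n • eMon)
      have key := Ideal.add_mem I A1 (Ideal.mul_mem_left I (c ^ n) A2)
      have hm : m + (n + 1) • eMon = m + n • eMon + eMon := by
        rw [succ_nsmul, add_assoc]
      rw [hm]
      convert key using 1
      ring
  intro m
  exact krull_aux hc I _ fun n => ⟨coeff (m + n • eMon) h, iter n m⟩

/-- A power series all of whose coefficients lie in the ideal generated by the `f i`
is an `A`-combination of the `f i`. -/
lemma exists_sum_of_coeff_mem {A : Type} [CommRing A] {ι : Type} [Fintype ι] (f : ι → A)
    (s : MvPowerSeries (Fin 2) A)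
    (hs : ∀ m, coeff m s ∈ Ideal.span (Set.range f)) :
    ∃ h : ι → MvPowerSeries (Fin 2) A, s = ∑ i, f i • h i := by
  choose u hu using fun m => (Submodule.mem_span_range_iff_exists_fun A).mp (hs m)
  refine ⟨fun i m => u m i, ?_⟩
  ext m
  rw [map_sum]
  have := (hu m).symm
  show _ = ∑ i, f i * u m i
  simpa [coeff_smul, smul_eq_mul, MvPowerSeries.coeff_apply, mul_comm] using this

/-- If `A` is a Noetherian local ring and `c` an element of its maximal ideal, then
`B = A⟦x,y⟧/(xy - c)` is flat as an `A`-module. -/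
theorem flat_of_hyper (A : Type) [CommRing A] [IsNoetherianRing A] [IsLocalRing A]
    (c : A) (hc : c ∈ IsLocalRing.maximalIdeal A) :
    Module.Flat A (Bring A c) := by
  haveI : Module.Flat A (MvPowerSeries (Fin 2) A) := flat_pi_aux A _
  set g : MvPowerSeries (Fin 2) A := X 0 * X 1 - (C c : MvPowerSeries (Fin 2) A) with hg
  have hKcond : ∀ (ι : Type) [Fintype ι] (f : ι → A) (v : ι → MvPowerSeries (Fin 2) A),
      (∑ i, f i • v i) ∈ (hyperIdeal A c).restrictScalars A →
      ∃ w : ι → MvPowerSeries (Fin 2) A, (∀ i, w i ∈ (hyperIdeal A c).restrictScalars A) ∧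
        ∑ i, f i • v i = ∑ i, f i • w i := by
    intro ι _ f v hv
    rw [Submodule.restrictScalars_mem, hyperIdeal, Ideal.mem_span_singleton'] at hv
    obtain ⟨h, hh⟩ := hv
    set I := Ideal.span (Set.range f) with hI
    have hcoeffsum : ∀ m, coeff m (∑ i, f i • v i) ∈ I := by
      intro m
      rw [map_sum]
      refine Ideal.sum_mem _ fun i _ => ?_
      rw [coeff_smul]
      exact Ideal.mul_mem_right _ _ (Ideal.subset_span ⟨i, rfl⟩)
    have hrel : ∀ m, coeff m (g * h) ∈ I := by
      intro m
      rw [mul_comm, hh]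
      exact hcoeffsum m
    have hco : ∀ m, coeff m h ∈ I := nzd_mod hc I h hrel
    obtain ⟨t, ht⟩ := exists_sum_of_coeff_mem f h hco
    refine ⟨fun i => t i * g, fun i => ?_, ?_⟩
    · rw [Submodule.restrictScalars_mem, hyperIdeal]
      exact Ideal.mem_span_singleton'.mpr ⟨t i, rfl⟩
    · rw [← hh, ht, Finset.sum_mul]
      exact Finset.sum_congr rfl fun i _ => smul_mul_assoc (f i) (t i) g
  haveI := flat_quotient_aux _ hKcond
  exact Module.Flat.of_linearEquiv
    (Submodule.Quotient.restrictScalarsEquiv A (hyperIdeal A c)).symm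
end

section
/- The quotient ring D⟦z⟧[X]/(X² − zX + c) of the polynomial ring over D⟦z⟧ by the ideal generated by the monic quadratic X² − zX + c is reduced. -/
open Polynomial

lemma linear_eq_zero_aux {R : Type*} [Semiring R] {u v : R}
    (h : C u * X + C v = 0) : u = 0 ∧ v = 0 := by
  have h1 := congrArg (fun r => Polynomial.coeff r 1) h
  have h0 := congrArg (fun r => Polynomial.coeff r 0) h
  simp only [coeff_add, coeff_C_mul, coeff_X_one, coeff_X_zero, coeff_C, coeff_zero,
    mul_one, mul_zero, if_true, if_false, one_ne_zero, zero_ne_one, reduceIte,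
    add_zero, zero_add] at h1 h0
  exact ⟨h1, h0⟩

lemma sq_zero_isReduced {R : Type*} [CommRing R]
    (h : ∀ x : R, x ^ 2 = 0 → x = 0) : IsReduced R := by
  constructor
  rintro x ⟨n, hn⟩
  have key : ∀ k, x ^ (2 ^ k) = 0 → x = 0 := by
    intro k
    induction k with
    | zero => simp
    | succ k ih =>
      intro h2
      apply ih
      apply h
      rw [← pow_mul, ← pow_succ]
      exact h2
  apply key n
  obtain ⟨y, hy⟩ := pow_dvd_pow x (Nat.lt_two_pow_self (n := n)).le
  rw [hy, hn, zero_mul]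

/-- If `D` is an integral domain and `c ∈ D`, then the quotient
`D⟦z⟧[X]/(X² - zX + c)` of the polynomial ring over the power series ring `D⟦z⟧`
by the monic quadratic `X² - zX + c` is reduced. -/
theorem quad_quotient_reduced (D : Type) [CommRing D] [IsDomain D] (c : D) :
    IsReduced (Polynomial (PowerSeries D) ⧸
      Ideal.span {Polynomial.X ^ 2 - Polynomial.C PowerSeries.X * Polynomial.X +
        Polynomial.C (PowerSeries.C c)}) := by
  set z : PowerSeries D := PowerSeries.X with hz
  set c' : PowerSeries D := PowerSeries.C c with hc'
  set f : Polynomial (PowerSeries D) := X ^ 2 - C z * X + C c' with hf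
  have hmon : f.Monic := by
    have : f = X ^ 2 + (-(C z * X) + C c') := by rw [hf]; ring
    rw [this]
    apply monic_X_pow_add
    apply lt_of_le_of_lt (degree_add_le _ _)
    simp only [max_lt_iff, degree_neg]
    constructor
    · exact lt_of_le_of_lt (degree_mul_le _ _) (by
        have h1 : (C z).degree ≤ 0 := degree_C_le
        have h2 : (X : (PowerSeries D)[X]).degree ≤ 1 := degree_X_le
        calc (C z).degree + X.degree ≤ 0 + 1 := add_le_add h1 h2
        _ < 2 := by norm_num)
    · exact (degree_C_le).trans_lt (by norm_num)
  refine sq_zero_isReduced (R := (PowerSeries D)[X] ⧸ Ideal.span {f}) fun x hx => ?_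
  obtain ⟨p, rfl⟩ := Ideal.Quotient.mk_surjective x
  set q : Polynomial (PowerSeries D) := p %ₘ f with hqdef
  have hmk : Ideal.Quotient.mk (Ideal.span {f}) q = Ideal.Quotient.mk _ p := by
    rw [hqdef, modByMonic_eq_sub_mul_div _ f, map_sub, map_mul]
    have : Ideal.Quotient.mk (Ideal.span {f}) f = 0 := by
      rw [Ideal.Quotient.eq_zero_iff_mem]
      exact Ideal.subset_span rfl
    rw [sub_eq_self, ← map_mul, Ideal.Quotient.eq_zero_iff_mem]; exact Ideal.mul_mem_right _ _ (Ideal.subset_span rfl)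
  have hdvd : f ∣ q ^ 2 := by
    rw [← Ideal.mem_span_singleton, ← Ideal.Quotient.eq_zero_iff_mem, map_pow, hmk]
    exact hx
  have hqdeg : q.degree < 2 := by
    have := degree_modByMonic_lt p hmon
    rwa [show f.degree = 2 from ?_] at this
    rw [hf]
    compute_degree!
  set a : PowerSeries D := q.coeff 0 with ha
  set b : PowerSeries D := q.coeff 1 with hb
  have hq1 : q = C b * X + C a :=
    eq_X_add_C_of_degree_le_one (Order.le_of_lt_succ (by exact_mod_cast hqdeg))
  -- remainder of q^2 modulo f
  have hrem : q ^ 2 = C (b ^ 2) * f + (C (2 * a * b + b ^ 2 * z) * X + C (a ^ 2 - b ^ 2 * c')) := by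
    rw [hq1, hf]
    simp only [map_add, map_mul, map_sub, map_pow, map_ofNat]
    ring
  have hdvd2 : f ∣ C (2 * a * b + b ^ 2 * z) * X + C (a ^ 2 - b ^ 2 * c') := by
    have : f ∣ C (b ^ 2) * f := Dvd.intro _ (mul_comm _ _)
    have := dvd_sub hdvd this
    rwa [hrem, add_sub_cancel_left] at this
  have hremzero : C (2 * a * b + b ^ 2 * z) * X + C (a ^ 2 - b ^ 2 * c') = 0 := by
    apply eq_zero_of_dvd_of_degree_lt hdvd2
    rw [show f.degree = 2 from by rw [hf]; compute_degree!]
    apply lt_of_le_of_lt (degree_add_le _ _)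
    simp only [max_lt_iff]
    constructor
    · exact lt_of_le_of_lt (degree_mul_le _ _) (by
        have h1 : (C (2 * a * b + b ^ 2 * z)).degree ≤ 0 := degree_C_le
        have h2 : (X : (PowerSeries D)[X]).degree ≤ 1 := degree_X_le
        calc _ ≤ (0:WithBot ℕ) + 1 := add_le_add h1 h2
        _ < 2 := by norm_num)
    · exact (degree_C_le).trans_lt (by norm_num)
  obtain ⟨h1, h0⟩ := linear_eq_zero_aux hremzero
  have hb0 : b = 0 := by
    by_contra hbne
    have h1' : b * (2 * a + b * z) = 0 := by ring_nf; ring_nf at h1; linear_combination h1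
    have h2a : 2 * a + b * z = 0 := by
      rcases mul_eq_zero.mp h1' with h | h
      · exact absurd h hbne
      · exact h
    have hsq : b ^ 2 * (z ^ 2 - 4 * c') = 0 := by
      linear_combination (b * z - 2 * a) * h2a + 4 * h0
    have : z ^ 2 - 4 * c' = 0 := by
      rcases mul_eq_zero.mp hsq with h | h
      · exact absurd (pow_eq_zero_iff (by norm_num) |>.mp h) hbne
      · exact h
    have h4 : (4 : PowerSeries D) * c' = PowerSeries.C (4 * c) := by
      rw [map_mul, map_ofNat]
    rw [hc'] at h4
    rw [h4] at this
    have hcoe := congrArg (PowerSeries.coeff 2) this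
    simp [hz, PowerSeries.coeff_C, pow_two] at hcoe
  have ha0 : a = 0 := by
    have : a ^ 2 = 0 := by rw [hb0] at h0; simpa using h0
    exact pow_eq_zero_iff (by norm_num) |>.mp this
  have hq0 : q = 0 := by rw [hq1, ha0, hb0]; simp
  rw [← hmk, hq0, map_zero]
end

section
/- T satisfies T(ab) = T(ba) for all a, b ∈ A[G], and T vanishes on the two-sided ideal J of A[G] generated by the elements g² − t(g)·g + d(g)·1 for g ∈ G. In particular, T factors through an A-linear map on the Cayley–Hamilton quotient A[G]/J. -/
/-- Let `(t, d)` be a 2-dimensional determinant datum on a group `G` with values in a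
commutative ring `A`, and let `T : A[G] → A` be the `A`-linear extension of `t` to the
group algebra.  Then `T(ab) = T(ba)` for all `a, b ∈ A[G]`, and `T` vanishes on the
two-sided ideal `J` of `A[G]` generated by the elements `g² - t(g)·g + d(g)·1` for
`g ∈ G` (so that `T` factors through the Cayley–Hamilton quotient `A[G]/J`). -/
theorem trace_symm_and_vanishes_on_CH_ideal (A : Type) [CommRing A]
    (G : Type) [Group G] (d : G →* Aˣ) (t : G → A) (ht_one : t 1 = 2)
    (ht_comm : ∀ g h : G, t (g * h) = t (h * g))
    (h_det : ∀ g h : G, (d g : A) * t (g⁻¹ * h) - t g * t h + t (g * h) = 0)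
    (T : MonoidAlgebra A G →ₗ[A] A)
    (hT : ∀ g : G, T (MonoidAlgebra.single g 1) = t g)
    (J : TwoSidedIdeal (MonoidAlgebra A G))
    (hJ : J = TwoSidedIdeal.span
      {x : MonoidAlgebra A G | ∃ g : G,
        x = MonoidAlgebra.single g 1 * MonoidAlgebra.single g 1
          - MonoidAlgebra.single g (t g) + MonoidAlgebra.single 1 ((d g : A))}) :
    (∀ a b : MonoidAlgebra A G, T (a * b) = T (b * a)) ∧
      (∀ x ∈ J, T x = 0) := by
  have hTs : ∀ (g : G) (a : A), T (MonoidAlgebra.single g a) = a * t g := by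
    intro g a
    have : MonoidAlgebra.single g a = a • MonoidAlgebra.single g (1 : A) := by
      rw [MonoidAlgebra.smul_single', mul_one]
    rw [this, map_smul, hT, smul_eq_mul]
  -- trace property
  have trace : ∀ a b : MonoidAlgebra A G, T (a * b) = T (b * a) := by
    intro a b
    induction a using MonoidAlgebra.induction_linear with
    | zero => simp
    | add f g hf hg => rw [add_mul, mul_add, map_add, map_add, hf, hg]
    | single g r =>
      induction b using MonoidAlgebra.induction_linear with
      | zero => simp
      | add f1 g1 hf hg => rw [add_mul, mul_add, map_add, map_add, hf, hg]
      | single h s =>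
        rw [MonoidAlgebra.single_mul_single, MonoidAlgebra.single_mul_single,
          hTs, hTs, ht_comm, mul_comm r s]
  refine ⟨trace, ?_⟩
  -- key: T (c * s) = 0 for generators s
  have key : ∀ (c : MonoidAlgebra A G) (g : G),
      T (c * (MonoidAlgebra.single g 1 * MonoidAlgebra.single g 1
        - MonoidAlgebra.single g (t g) + MonoidAlgebra.single 1 ((d g : A)))) = 0 := by
    intro c g
    induction c using MonoidAlgebra.induction_linear with
    | zero => simp
    | add f1 g1 hf hg => rw [add_mul, map_add, hf, hg, add_zero]
    | single h r =>
      rw [mul_add, mul_sub]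
      simp only [MonoidAlgebra.single_mul_single]
      rw [map_add, map_sub, hTs, hTs, hTs]
      have hd := h_det g (g * h)
      rw [inv_mul_cancel_left] at hd
      have e1 : t (h * (g * g)) = t (g * (g * h)) := by
        rw [ht_comm, mul_assoc]
      have e2 : t (h * g) = t (g * h) := ht_comm h g
      rw [e1, e2, mul_one, mul_one]
      ring_nf
      linear_combination r * hd
  intro x hx
  rw [hJ] at hx
  -- the set of x with ∀ c, T (c * x) = 0 is a two-sided ideal
  let I : TwoSidedIdeal (MonoidAlgebra A G) :=
    TwoSidedIdeal.mk' {x | ∀ c, T (c * x) = 0}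
      (by intro c; simp)
      (by intro x y hx hy c; rw [mul_add, map_add, hx, hy, add_zero])
      (by intro x hx c; rw [mul_neg, map_neg, hx, neg_zero])
      (by intro x y hy c; rw [← mul_assoc]; exact hy _)
      (by intro x y hx c
          rw [← mul_assoc, trace, ← mul_assoc]; exact hx _)
  have hxI : x ∈ I := by
    refine TwoSidedIdeal.mem_span_iff.mp hx I ?_
    rintro s ⟨g, rfl⟩
    rw [SetLike.mem_coe, TwoSidedIdeal.mem_mk']
    intro c
    exact key c g
  rw [TwoSidedIdeal.mem_mk'] at hxI
  simpa using hxI 1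
end

section
/- Suppose ψ₁, ψ₂ : G → Aˣ both lift χ₁ and ψ₁′, ψ₂′ : G → Aˣ both lift χ₂, and that for every g ∈ G one has ψ₁(g) + ψ₁′(g) = ψ₂(g) + ψ₂′(g) and ψ₁(g)·ψ₁′(g) = ψ₂(g)·ψ₂′(g). Then ψ₁ = ψ₂ and ψ₁′ = ψ₂′. (Equivalently: a pair of character lifts of (χ₁, χ₂) is uniquely determined by the associated split 2-dimensional determinant, i.e. by the pair of functions (ψ + ψ′, ψ·ψ′).) -/
/-- Let `A` be a commutative local ring with residue field `k`, `G` a group, and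
`χ₁ ≠ χ₂ : G → kˣ` two distinct characters.  If `ψ₁, ψ₂ : G → Aˣ` both lift `χ₁`,
`ψ₁', ψ₂' : G → Aˣ` both lift `χ₂`, and for every `g ∈ G` one has
`ψ₁(g) + ψ₁'(g) = ψ₂(g) + ψ₂'(g)` and `ψ₁(g)·ψ₁'(g) = ψ₂(g)·ψ₂'(g)`, then `ψ₁ = ψ₂`
and `ψ₁' = ψ₂'`; i.e. a pair of character lifts of `(χ₁, χ₂)` is determined by the
associated split 2-dimensional determinant. -/
theorem lift_determined_by_determinant (A : Type) [CommRing A] [IsLocalRing A]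
    (G : Type) [Group G]
    (χ₁ χ₂ : G →* (IsLocalRing.ResidueField A)ˣ) (hχ : χ₁ ≠ χ₂)
    (ψ₁ ψ₂ ψ₁' ψ₂' : G →* Aˣ)
    (h₁ : (Units.map (IsLocalRing.residue A).toMonoidHom).comp ψ₁ = χ₁)
    (h₂ : (Units.map (IsLocalRing.residue A).toMonoidHom).comp ψ₂ = χ₁)
    (h₁' : (Units.map (IsLocalRing.residue A).toMonoidHom).comp ψ₁' = χ₂)
    (h₂' : (Units.map (IsLocalRing.residue A).toMonoidHom).comp ψ₂' = χ₂)
    (hsum : ∀ g : G, (ψ₁ g : A) + (ψ₁' g : A) = (ψ₂ g : A) + (ψ₂' g : A))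
    (hprod : ∀ g : G, (ψ₁ g : A) * (ψ₁' g : A) = (ψ₂ g : A) * (ψ₂' g : A)) :
    ψ₁ = ψ₂ ∧ ψ₁' = ψ₂' := by
  -- residue values
  have r₂ : ∀ g, IsLocalRing.residue A (ψ₂ g : A) = (χ₁ g : IsLocalRing.ResidueField A) := by
    intro g
    have := DFunLike.congr_fun h₂ g
    exact congrArg Units.val this
  have r₁' : ∀ g, IsLocalRing.residue A (ψ₁' g : A) = (χ₂ g : IsLocalRing.ResidueField A) := by
    intro g
    have := DFunLike.congr_fun h₁' g
    exact congrArg Units.val this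
  -- the key quadratic identity
  have key : ∀ g, ((ψ₂ g : A) - ψ₁ g) * ((ψ₂ g : A) - ψ₁' g) = 0 := by
    intro g
    linear_combination (hprod g) - (ψ₂ g : A) * (hsum g)
  -- if the characters differ at g, then ψ₁ g = ψ₂ g
  have step : ∀ g, χ₁ g ≠ χ₂ g → ψ₁ g = ψ₂ g := by
    intro g hg
    have hunit : IsUnit ((ψ₂ g : A) - ψ₁' g) := by
      rw [← IsLocalRing.notMem_maximalIdeal]
      intro hmem
      have : IsLocalRing.residue A ((ψ₂ g : A) - ψ₁' g) = 0 :=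
        (Ideal.Quotient.eq_zero_iff_mem).2 hmem
      rw [map_sub, r₂, r₁'] at this
      exact hg (Units.ext (by linear_combination this))
    have : (ψ₂ g : A) - ψ₁ g = 0 := by
      rcases hunit with ⟨u, hu⟩
      have := key g
      rw [← hu] at this
      have h0 : ((ψ₂ g : A) - ψ₁ g) * u * (u⁻¹ : Aˣ) = 0 * (u⁻¹ : Aˣ) := by rw [this]
      simpa [mul_assoc] using h0
    exact Units.ext (by linear_combination -this)
  -- pick h with χ₁ h ≠ χ₂ h
  obtain ⟨h, hh⟩ : ∃ h, χ₁ h ≠ χ₂ h := by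
    by_contra hcon
    push_neg at hcon
    exact hχ (MonoidHom.ext hcon)
  -- ψ₁ = ψ₂ everywhere
  have main : ∀ g, ψ₁ g = ψ₂ g := by
    intro g
    by_cases hg : χ₁ g ≠ χ₂ g
    · exact step g hg
    · push_neg at hg
      have hgh : χ₁ (g * h) ≠ χ₂ (g * h) := by
        rw [map_mul, map_mul, hg]
        intro heq
        exact hh (mul_left_cancel heq)
      have e1 := step (g * h) hgh
      have e2 := step h hh
      rw [map_mul, map_mul, e2] at e1
      exact mul_right_cancel e1
  refine ⟨MonoidHom.ext main, MonoidHom.ext fun g => Units.ext ?_⟩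
  have := hsum g
  rw [main g] at this
  linear_combination this
end

section
/- For every g ∈ P one has e·g·e ≡ e modulo J; equivalently, e·(g − 1)·e ∈ J for all g ∈ P. -/
open SemidirectProduct

/-- Let `k` be a field, `H` a finite group whose order is invertible in `k`, `P` a
group with an action `φ` of `H`, and `G = P ⋊ H`.  Let `χ₁ ≠ χ₂ : H → kˣ` be two
distinct characters, regarded as functions on `G` via the projection `G → H`.  Let `J`
be the two-sided ideal of `k[G]` generated by `g² - (χ₁(g) + χ₂(g))·g + χ₁(g)χ₂(g)·1`
for `g ∈ G`, and let `e = |H|⁻¹ ∑_{h ∈ H} χ₂(h)·h⁻¹ ∈ k[G]`.  Then for every `g ∈ P`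
one has `e·g·e ≡ e (mod J)`, i.e. `e·g·e - e ∈ J`. -/
theorem idem_conj_mem_CH_ideal (k : Type) [Field k] (P H : Type)
    [Group P] [Group H] [Fintype H] (hH : (Fintype.card H : k) ≠ 0)
    (φ : H →* MulAut P)
    (χ₁ χ₂ : H →* kˣ) (hχ : χ₁ ≠ χ₂)
    (J : TwoSidedIdeal (MonoidAlgebra k (P ⋊[φ] H)))
    (hJ : J = TwoSidedIdeal.span
      {x : MonoidAlgebra k (P ⋊[φ] H) | ∃ g : P ⋊[φ] H,
        x = MonoidAlgebra.single g 1 * MonoidAlgebra.single g 1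
          - MonoidAlgebra.single g ((χ₁ (rightHom g) : k) + (χ₂ (rightHom g) : k))
          + MonoidAlgebra.single 1 ((χ₁ (rightHom g) : k) * (χ₂ (rightHom g) : k))})
    (e : MonoidAlgebra k (P ⋊[φ] H))
    (he : e = (Fintype.card H : k)⁻¹ •
      ∑ h : H, MonoidAlgebra.single ((inr h⁻¹ : P ⋊[φ] H)) ((χ₂ h : k))) :
    ∀ g : P, e * MonoidAlgebra.single ((inl g : P ⋊[φ] H)) 1 * e - e ∈ J := by
  -- `e` absorbs `inr h` on the right with factor `χ₂ h`
  have he2 : ∀ h : H, e * MonoidAlgebra.single (inr h : P ⋊[φ] H) (1:k) = (χ₂ h : k) • e := by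
    intro h
    rw [he]
    simp only [Finset.smul_sum, Finset.sum_mul, smul_mul_assoc]
    refine Finset.sum_equiv (Equiv.mulLeft h⁻¹) (by simp) (fun t _ => ?_)
    simp only [Equiv.coe_mulLeft, MonoidAlgebra.single_mul_single, mul_one,
      MonoidAlgebra.smul_single']
    rw [show (inr t⁻¹ : P ⋊[φ] H) * inr h = inr ((h⁻¹*t)⁻¹) by rw [← map_mul]; congr 1; group]
    congr 1
    rw [map_mul, map_inv]
    push_cast
    field_simp
  -- `e` absorbs `inr h` on the left with factor `χ₂ h`
  have he3 : ∀ h : H, MonoidAlgebra.single (inr h : P ⋊[φ] H) (1:k) * e = (χ₂ h : k) • e := by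
    intro h
    rw [he]
    simp only [Finset.smul_sum, Finset.mul_sum, mul_smul_comm]
    refine Finset.sum_equiv (Equiv.mulRight h⁻¹) (by simp) (fun t _ => ?_)
    simp only [Equiv.coe_mulRight, MonoidAlgebra.single_mul_single, one_mul,
      MonoidAlgebra.smul_single']
    rw [show (inr h : P ⋊[φ] H) * inr t⁻¹ = inr ((t * h⁻¹)⁻¹) by rw [← map_mul]; congr 1; group]
    congr 1
    rw [map_mul, map_inv]
    push_cast
    field_simp
  -- `e` is idempotent
  have hee : e * e = e := by
    have step : ∀ t : H, e * MonoidAlgebra.single (inr t⁻¹ : P ⋊[φ] H) ((χ₂ t : k)) = e := by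
      intro t
      have h1 : MonoidAlgebra.single (inr t⁻¹ : P ⋊[φ] H) ((χ₂ t : k))
          = (χ₂ t : k) • MonoidAlgebra.single (inr t⁻¹ : P ⋊[φ] H) (1:k) := by
        rw [MonoidAlgebra.smul_single', mul_one]
      rw [h1, mul_smul_comm, he2, smul_smul, ← Units.val_mul, ← map_mul, mul_inv_cancel,
        map_one, Units.val_one, one_smul]
    nth_rewrite 2 [he]
    rw [mul_smul_comm, Finset.mul_sum]
    simp only [step, Finset.sum_const, Finset.card_univ, smul_smul]
    rw [← Nat.cast_smul_eq_nsmul k, smul_smul, inv_mul_cancel₀ hH, one_smul]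
  -- sandwich lemma
  have hsand : ∀ (h h' : H) (p : P),
      e * MonoidAlgebra.single ((inr h : P ⋊[φ] H) * inl p * inr h') (1:k) * e
        = ((χ₂ h : k) * (χ₂ h' : k)) •
          (e * MonoidAlgebra.single (inl p : P ⋊[φ] H) (1:k) * e) := by
    intro h h' p
    have hs : MonoidAlgebra.single ((inr h : P ⋊[φ] H) * inl p * inr h') (1:k)
        = MonoidAlgebra.single (inr h : P ⋊[φ] H) (1:k)
          * MonoidAlgebra.single (inl p : P ⋊[φ] H) (1:k)
          * MonoidAlgebra.single (inr h' : P ⋊[φ] H) (1:k) := by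
      simp [MonoidAlgebra.single_mul_single]
    rw [hs, ← mul_assoc, ← mul_assoc, he2, smul_mul_assoc, smul_mul_assoc, smul_mul_assoc,
      mul_assoc _ _ e, he3, mul_smul_comm, smul_smul]
  intro g
  suffices key : ∀ p : P,
      e * MonoidAlgebra.single ((inl p⁻¹ : P ⋊[φ] H)) (1:k) * e - e ∈ J by
    have := key g⁻¹; rwa [inv_inv] at this
  intro p
  set X := e * MonoidAlgebra.single ((inl p : P ⋊[φ] H)) (1:k) * e with hX
  set Y := e * MonoidAlgebra.single ((inl p⁻¹ : P ⋊[φ] H)) (1:k) * e with hY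
  have hsmul : ∀ (c : k) (x : MonoidAlgebra k (P ⋊[φ] H)), x ∈ J → c • x ∈ J := by
    intro c x hx
    rw [Algebra.smul_def]
    exact J.mul_mem_left _ _ hx
  -- the sandwiched generator relation
  have memE : ∀ h : H,
      ((χ₂ h : k) * (χ₂ h : k)) • Y - (((χ₁ h : k) + (χ₂ h : k)) * (χ₂ h : k)) • e
        + ((χ₁ h : k) * (χ₂ h : k)) • X ∈ J := by
    intro h
    set u : P ⋊[φ] H := inl p⁻¹ * inr h with hu
    have hru : rightHom u = h := by simp [hu]
    have hmem : MonoidAlgebra.single u (1:k) * MonoidAlgebra.single u 1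
        - MonoidAlgebra.single u ((χ₁ (rightHom u) : k) + (χ₂ (rightHom u) : k))
        + MonoidAlgebra.single 1 ((χ₁ (rightHom u) : k) * (χ₂ (rightHom u) : k)) ∈ J := by
      rw [hJ]; exact TwoSidedIdeal.subset_span ⟨u, rfl⟩
    rw [hru] at hmem
    have hEmem := J.mul_mem_right _ e
      (J.mul_mem_left (e * MonoidAlgebra.single ((inl p : P ⋊[φ] H)) (1:k)) _ hmem)
    have hT1 : e * MonoidAlgebra.single ((inl p : P ⋊[φ] H)) (1:k)
        * (MonoidAlgebra.single u (1:k) * MonoidAlgebra.single u 1) * e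
        = ((χ₂ h : k) * (χ₂ h : k)) • Y := by
      have elt : (inl p : P ⋊[φ] H) * (u * u) = inr h * inl p⁻¹ * inr h := by
        rw [hu]; simp [← mul_assoc, ← map_mul]
      rw [MonoidAlgebra.single_mul_single, mul_assoc e, MonoidAlgebra.single_mul_single,
        one_mul, one_mul, elt, hsand]
    have hT2 : e * MonoidAlgebra.single ((inl p : P ⋊[φ] H)) (1:k)
        * MonoidAlgebra.single u ((χ₁ h : k) + (χ₂ h : k)) * e
        = (((χ₁ h : k) + (χ₂ h : k)) * (χ₂ h : k)) • e := by
      have elt : (inl p : P ⋊[φ] H) * u = inr h := by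
        rw [hu]; simp [← mul_assoc, ← map_mul]
      have hc : MonoidAlgebra.single u ((χ₁ h : k) + (χ₂ h : k))
          = ((χ₁ h : k) + (χ₂ h : k)) • MonoidAlgebra.single u (1:k) := by
        rw [MonoidAlgebra.smul_single', mul_one]
      rw [hc, mul_smul_comm, smul_mul_assoc, mul_assoc e, MonoidAlgebra.single_mul_single,
        one_mul, elt, he2, smul_mul_assoc, hee, smul_smul]
    have hT3 : e * MonoidAlgebra.single ((inl p : P ⋊[φ] H)) (1:k)
        * MonoidAlgebra.single (1 : P ⋊[φ] H) ((χ₁ h : k) * (χ₂ h : k)) * e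
        = ((χ₁ h : k) * (χ₂ h : k)) • X := by
      have hc : MonoidAlgebra.single (1 : P ⋊[φ] H) ((χ₁ h : k) * (χ₂ h : k))
          = ((χ₁ h : k) * (χ₂ h : k)) • (1 : MonoidAlgebra k (P ⋊[φ] H)) := by
        rw [MonoidAlgebra.one_def, MonoidAlgebra.smul_single', mul_one]
      rw [hc, mul_smul_comm, mul_one, smul_mul_assoc, hX]
    rw [mul_add, mul_sub, add_mul, sub_mul, hT1, hT2, hT3] at hEmem
    exact hEmem
  -- pick h₀ with χ₁ h₀ ≠ χ₂ h₀
  obtain ⟨h₀, hh₀⟩ : ∃ h₀, χ₁ h₀ ≠ χ₂ h₀ := by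
    by_contra hc
    push_neg at hc
    exact hχ (MonoidHom.ext hc)
  set c₁ : k := (χ₁ h₀ : k) with hc₁
  set c₂ : k := (χ₂ h₀ : k) with hc₂
  have hc₂0 : c₂ ≠ 0 := Units.ne_zero _
  have hcne : c₁ ≠ c₂ := fun hcc => hh₀ (Units.ext hcc)
  have hd : c₂ * (c₁ - c₂) ≠ 0 := mul_ne_zero hc₂0 (sub_ne_zero.mpr hcne)
  have mem1 := memE 1
  simp only [map_one, Units.val_one, one_mul, mul_one, one_smul] at mem1
  have mem0 := memE h₀
  have hcomb : (c₁ * c₂) • (Y - ((1:k) + 1) • e + X)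
      - ((c₂ * c₂) • Y - ((c₁ + c₂) * c₂) • e + (c₁ * c₂) • X) ∈ J :=
    J.sub_mem (hsmul _ _ mem1) mem0
  have hid : (c₂ * (c₁ - c₂)) • (Y - e)
      = (c₁ * c₂) • (Y - ((1:k) + 1) • e + X)
        - ((c₂ * c₂) • Y - ((c₁ + c₂) * c₂) • e + (c₁ * c₂) • X) := by
    module
  have : Y - e = (c₂ * (c₁ - c₂))⁻¹ • ((c₂ * (c₁ - c₂)) • (Y - e)) := by
    rw [smul_smul, inv_mul_cancel₀ hd, one_smul]
  rw [this, hid]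
  exact hsmul _ _ hcomb
end
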